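/- arXiv:1610.02698 — 4 statements merged into one kernel-verified Lean document; each statement's English description precedes it below -/
import Mathlib

section
/- For every integer n ≥ 1, the number of barred permutations satisfies the recurrence b_{n+1} = C(n+1, 2)·b_{n-1} + (n+1)·b_n, where C(n+1,2) is the binomial coefficient, together with the initial conditions b_0 = b_1 = 1. -/
/-- A barred permutation of `[n]`: an ordered set partition of `Fin n` into
blocks of size 1 or 2, encoded as a list of pairwise disjoint subsets whose
union is everything. -/
def IsBarredPermutation {n : ℕ} (L : List (Finset (Fin n))) : Prop :=
  L.Pairwise Disjoint ∧ (∀ B ∈ L, B.card = 1 ∨ B.card = 2) ∧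
    L.foldr (· ∪ ·) ∅ = Finset.univ

/-- `barredCount n` is the number of barred permutations of `[n]`. -/
noncomputable def barredCount (n : ℕ) : ℕ :=
  Nat.card { L : List (Finset (Fin n)) // IsBarredPermutation L }

open Finset
namespace BarredAux

variable {α : Type*} [DecidableEq α]

def IsBP (S : Finset α) (L : List (Finset α)) : Prop :=
  L.Pairwise Disjoint ∧ (∀ B ∈ L, B.card = 1 ∨ B.card = 2) ∧
    L.foldr (· ∪ ·) ∅ = S

lemma subset_foldr {L : List (Finset α)} {B : Finset α} (h : B ∈ L) :
    B ⊆ L.foldr (· ∪ ·) ∅ := by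
  induction L with
  | nil => simp at h
  | cons C T ih =>
    rcases List.mem_cons.1 h with rfl | h
    · exact Finset.subset_union_left
    · exact (ih h).trans Finset.subset_union_right

section relabel

variable {β : Type*} [DecidableEq β] {S : Finset α} (e : β ≃ {x // x ∈ S})

def emb (e : β ≃ {x // x ∈ S}) : β ↪ α :=
  ⟨fun b => (e b : α), fun a b h => e.injective (Subtype.ext h)⟩

lemma map_emb_univ [Fintype β] : Finset.map (emb e) (univ : Finset β) = S := by
  ext x
  simp only [Finset.mem_map, Finset.mem_univ, true_and, emb,
    Function.Embedding.coeFn_mk]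
  constructor
  · rintro ⟨b, rfl⟩; exact (e b).2
  · intro hx; exact ⟨e.symm ⟨x, hx⟩, congrArg Subtype.val (e.apply_symm_apply ⟨x, hx⟩)⟩

lemma foldr_map_map (f : β ↪ α) (L : List (Finset β)) :
    (L.map (Finset.map f)).foldr (· ∪ ·) ∅ = Finset.map f (L.foldr (· ∪ ·) ∅) := by
  induction L with
  | nil => simp
  | cons B T ih => simp [ih, Finset.map_union]

lemma foldr_map_preimage (f : β ↪ α) (L : List (Finset α)) :
    (L.map (fun B => B.preimage f f.injective.injOn)).foldr (· ∪ ·) ∅ =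
      (L.foldr (· ∪ ·) ∅).preimage f f.injective.injOn := by
  induction L with
  | nil => ext x; simp
  | cons B T ih =>
    simp only [List.map_cons, List.foldr_cons, ih]
    ext x; simp [Finset.mem_preimage]
    exact Iff.intro (Or.imp (fun h => Finset.mem_preimage.2 h) (fun h => Finset.mem_preimage.2 h)) (Or.imp (fun h => Finset.mem_preimage.1 h) (fun h => Finset.mem_preimage.1 h))

lemma map_preimage_of_subset (f : β ↪ α) {R : Finset β} {A : Finset α}
    (hA : A ⊆ Finset.map f R) :
    Finset.map f (A.preimage f f.injective.injOn) = A := by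
  ext x
  simp only [Finset.mem_map, Finset.mem_preimage]
  constructor
  · rintro ⟨b, hb, rfl⟩; exact hb
  · intro hx
    rcases Finset.mem_map.1 (hA hx) with ⟨b, -, rfl⟩
    exact ⟨b, hx, rfl⟩

variable [Fintype β]

lemma isBP_map {L : List (Finset β)} (h : IsBP (univ : Finset β) L) :
    IsBP S (L.map (Finset.map (emb e))) := by
  obtain ⟨h1, h2, h3⟩ := h
  refine ⟨h1.map _ (fun _ _ hd => (Finset.disjoint_map (emb e)).2 hd), ?_, ?_⟩
  · intro B hB
    rcases List.mem_map.1 hB with ⟨C, hC, rfl⟩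
    simpa using h2 C hC
  · rw [foldr_map_map, h3, map_emb_univ]

lemma isBP_preimage {L : List (Finset α)} (h : IsBP S L) :
    IsBP (univ : Finset β)
      (L.map (fun B => B.preimage (emb e) (emb e).injective.injOn)) := by
  obtain ⟨h1, h2, h3⟩ := h
  refine ⟨h1.map _ (fun B C hd => by
      rw [Finset.disjoint_left] at hd ⊢
      intro x hx hx'
      exact hd (Finset.mem_preimage.1 hx) (Finset.mem_preimage.1 hx')), ?_, ?_⟩
  · intro B hB
    rcases List.mem_map.1 hB with ⟨C, hC, rfl⟩
    have hCS : C ⊆ Finset.map (emb e) univ := by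
      rw [map_emb_univ]; exact h3 ▸ subset_foldr hC
    have hc := congrArg Finset.card (map_preimage_of_subset (emb e) hCS)
    rw [Finset.card_map] at hc
    rw [hc]
    exact h2 C hC
  · rw [foldr_map_preimage, h3]
    ext b
    simp only [Finset.mem_preimage, Finset.mem_univ, iff_true]
    exact (e b).2

noncomputable def relabel : {L : List (Finset β) // IsBP (univ : Finset β) L} ≃
    {L : List (Finset α) // IsBP S L} where
  toFun Lh := ⟨Lh.1.map (Finset.map (emb e)), isBP_map e Lh.2⟩
  invFun Lh := ⟨Lh.1.map (fun B => B.preimage (emb e) (emb e).injective.injOn),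
    isBP_preimage e Lh.2⟩
  left_inv Lh := by
    apply Subtype.ext
    simp only [List.map_map]
    refine (List.map_congr_left fun B _ => ?_).trans Lh.1.map_id
    exact Finset.preimage_map (emb e) B
  right_inv Lh := by
    apply Subtype.ext
    simp only [List.map_map]
    refine (List.map_congr_left fun B hB => ?_).trans Lh.1.map_id
    have hBS : B ⊆ Finset.map (emb e) univ := by
      rw [map_emb_univ]; exact Lh.2.2.2 ▸ subset_foldr hB
    show Finset.map (emb e) (B.preimage (emb e) (emb e).injective.injOn) = id B
    exact map_preimage_of_subset (emb e) hBS

end relabel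

lemma disjoint_foldr {L : List (Finset α)} {B : Finset α}
    (h : ∀ C ∈ L, Disjoint B C) : Disjoint B (L.foldr (· ∪ ·) ∅) := by
  induction L with
  | nil => simp
  | cons C T ih =>
    simp only [List.foldr_cons, Finset.disjoint_union_right]
    exact ⟨h C (by simp), ih fun D hD => h D (by simp [hD])⟩

variable [Fintype α]

lemma foldr_tail {B : Finset α} {T : List (Finset α)}
    (h1 : (B :: T).Pairwise Disjoint)
    (h3 : (B :: T).foldr (· ∪ ·) ∅ = Finset.univ) :
    T.foldr (· ∪ ·) ∅ = Bᶜ := by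
  have hd : Disjoint B (T.foldr (· ∪ ·) ∅) :=
    disjoint_foldr (List.pairwise_cons.1 h1).1
  have : IsCompl B (T.foldr (· ∪ ·) ∅) := ⟨hd, codisjoint_iff.2 h3⟩
  exact this.compl_eq.symm

instance finiteBP (S : Finset α) :
    Finite {L : List (Finset α) // IsBP S L} := by
  have hfin : {L : List (Finset α) | IsBP S L}.Finite := by
    apply (List.finite_length_le (Finset α) (Fintype.card (Finset α))).subset
    rintro L ⟨h1, h2, -⟩
    have nd : L.Nodup := by
      refine h1.imp_of_mem ?_
      intro B C hB hC hd
      rintro rfl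
      have : B = ∅ := by simpa using disjoint_self.1 hd
      rcases h2 B hB with h | h <;> simp [this] at h
    exact nd.length_le_card
  exact hfin.to_subtype

section decomp

variable [Nonempty α]

def fwd : {L : List (Finset α) // IsBP (Finset.univ : Finset α) L} →
    Σ B : {B : Finset α // B.card = 1 ∨ B.card = 2}, {L : List (Finset α) // IsBP (↑B)ᶜ L}
  | ⟨[], h⟩ => absurd h.2.2 (fun heq => (Finset.univ_nonempty (α := α)).ne_empty heq.symm)
  | ⟨B :: T, h⟩ =>
    ⟨⟨B, h.2.1 B List.mem_cons_self⟩,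
      ⟨T, (List.pairwise_cons.1 h.1).2,
        fun C hC => h.2.1 C (List.mem_cons_of_mem _ hC),
        foldr_tail h.1 h.2.2⟩⟩

def bwd (x : Σ B : {B : Finset α // B.card = 1 ∨ B.card = 2},
      {L : List (Finset α) // IsBP (↑B)ᶜ L}) :
    {L : List (Finset α) // IsBP (Finset.univ : Finset α) L} :=
  ⟨(x.1 : Finset α) :: x.2.1,
    List.pairwise_cons.2 ⟨fun C hC => by
      have hsub : C ⊆ (↑x.1)ᶜ := x.2.2.2.2 ▸ subset_foldr hC
      exact Finset.disjoint_left.2 fun y hy hy' =>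
        (Finset.mem_compl.1 (hsub hy')) hy, x.2.2.1⟩,
    by
      intro C hC
      rcases List.mem_cons.1 hC with rfl | hC
      · exact x.1.2
      · exact x.2.2.2.1 C hC,
    by
      show (x.1 : Finset α) ∪ x.2.1.foldr (· ∪ ·) ∅ = Finset.univ
      rw [x.2.2.2.2, Finset.union_compl]⟩

def decomp : {L : List (Finset α) // IsBP (Finset.univ : Finset α) L} ≃
    Σ B : {B : Finset α // B.card = 1 ∨ B.card = 2}, {L : List (Finset α) // IsBP (↑B)ᶜ L} where
  toFun := fwd
  invFun := bwd
  left_inv := by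
    rintro ⟨(_ | ⟨B, T⟩), h⟩
    · exact absurd h.2.2 (fun heq => (Finset.univ_nonempty (α := α)).ne_empty heq.symm)
    · exact Subtype.ext rfl
  right_inv := by
    rintro ⟨⟨B, hB⟩, ⟨T, hT⟩⟩
    rfl

end decomp
end BarredAux

open BarredAux in
lemma card_isBP {m : ℕ} (S : Finset (Fin m)) :
    Nat.card {L : List (Finset (Fin m)) // IsBP S L} = barredCount S.card := by
  have e : Fin S.card ≃ {x // x ∈ S} := S.equivFin.symm
  rw [barredCount]
  have : {L : List (Finset (Fin S.card)) // IsBarredPermutation L} =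
      {L : List (Finset (Fin S.card)) // IsBP Finset.univ L} := rfl
  rw [this]
  exact (Nat.card_congr (relabel e)).symm

open BarredAux in
lemma barred_main (m : ℕ) (hm : 1 ≤ m) :
    barredCount m = m.choose 1 * barredCount (m - 1) + m.choose 2 * barredCount (m - 2) := by
  haveI : Nonempty (Fin m) := ⟨⟨0, hm⟩⟩
  have h0 : barredCount m =
      Nat.card {L : List (Finset (Fin m)) // IsBP (Finset.univ : Finset (Fin m)) L} := by
    have : barredCount m = Nat.card
        {L : List (Finset (Fin m)) // IsBP (Finset.univ : Finset (Fin m)) L} := rfl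
    exact this
  rw [h0, Nat.card_congr (decomp (α := Fin m))]
  letI : ∀ B : {B : Finset (Fin m) // B.card = 1 ∨ B.card = 2},
      Fintype {L : List (Finset (Fin m)) // IsBP (↑B)ᶜ L} :=
    fun B => @Fintype.ofFinite _ (finiteBP _)
  rw [Nat.card_eq_fintype_card, Fintype.card_sigma]
  have step : ∀ B : {B : Finset (Fin m) // B.card = 1 ∨ B.card = 2},
      Fintype.card {L : List (Finset (Fin m)) // IsBP (↑B)ᶜ L} =
        barredCount (m - (B : Finset (Fin m)).card) := by
    intro B
    rw [← Nat.card_eq_fintype_card, card_isBP]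
    congr 1
    rw [Finset.card_compl, Fintype.card_fin]
  simp_rw [step]
  rw [← Finset.sum_subtype (Finset.univ.filter
      (fun B : Finset (Fin m) => B.card = 1 ∨ B.card = 2))
      (by intro x; simp) (fun B => barredCount (m - B.card))]
  rw [Finset.filter_or, Finset.sum_union]
  · have c1 : ∀ B ∈ Finset.univ.filter (fun B : Finset (Fin m) => B.card = 1),
        barredCount (m - B.card) = barredCount (m - 1) := by
      intro B hB
      rw [(Finset.mem_filter.1 hB).2]
    have c2 : ∀ B ∈ Finset.univ.filter (fun B : Finset (Fin m) => B.card = 2),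
        barredCount (m - B.card) = barredCount (m - 2) := by
      intro B hB
      rw [(Finset.mem_filter.1 hB).2]
    rw [Finset.sum_congr rfl c1, Finset.sum_congr rfl c2,
      Finset.sum_const, Finset.sum_const]
    have d1 : (Finset.univ.filter (fun B : Finset (Fin m) => B.card = 1)).card
        = m.choose 1 := by
      rw [← Finset.powerset_univ, ← Finset.powersetCard_eq_filter,
        Finset.card_powersetCard, Finset.card_univ, Fintype.card_fin]
    have d2 : (Finset.univ.filter (fun B : Finset (Fin m) => B.card = 2)).card
        = m.choose 2 := by
      rw [← Finset.powerset_univ, ← Finset.powersetCard_eq_filter,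
        Finset.card_powersetCard, Finset.card_univ, Fintype.card_fin]
    rw [d1, d2, smul_eq_mul, smul_eq_mul]
  · rw [Finset.disjoint_left]
    intro B hB hB'
    have := (Finset.mem_filter.1 hB).2
    have := (Finset.mem_filter.1 hB').2
    omega


lemma barredCount_zero : barredCount 0 = 1 := by
  haveI : Unique {L : List (Finset (Fin 0)) // IsBarredPermutation L} := by
    refine ⟨⟨⟨[], List.Pairwise.nil, by simp, by simp⟩⟩, ?_⟩
    rintro ⟨L, h⟩
    apply Subtype.ext
    cases L with
    | nil => rfl
    | cons B T =>
      exfalso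
      have hc : B.card ≤ 0 := le_trans (Finset.card_le_univ B) (by simp)
      rcases h.2.1 B List.mem_cons_self with h' | h' <;> omega
  rw [barredCount, Nat.card_unique]

/-- For every `n ≥ 1`, `b_{n+1} = C(n+1,2) * b_{n-1} + (n+1) * b_n`,
with initial conditions `b_0 = b_1 = 1`. -/
theorem barredCount_recurrence :
    barredCount 0 = 1 ∧ barredCount 1 = 1 ∧
      ∀ n : ℕ, 1 ≤ n →
        barredCount (n + 1) =
          Nat.choose (n + 1) 2 * barredCount (n - 1) + (n + 1) * barredCount n := by
  refine ⟨barredCount_zero, ?_, ?_⟩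
  · rw [barred_main 1 le_rfl]
    simp [barredCount_zero]
  · intro n hn
    rw [barred_main (n + 1) (by omega)]
    have e1 : n + 1 - 1 = n := by omega
    have e2 : n + 1 - 2 = n - 1 := by omega
    rw [e1, e2, Nat.choose_one_right, Nat.add_comm]
end

section
/- For every natural number n, the number of barred permutations of [n] satisfies the closed formula 2^n · b_n = n! · Σ_{i=0}^{⌊n/2⌋} C(n+1, 2i+1) · 3^i, where C(n+1, 2i+1) denotes a binomial coefficient. -/
section Aux

set_option linter.unusedSectionVars false

variable {α : Type*} [Fintype α] [DecidableEq α]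

def IsBP (s : Finset α) (L : List (Finset α)) : Prop :=
  L.Pairwise Disjoint ∧ (∀ B ∈ L, B.card = 1 ∨ B.card = 2) ∧
    L.foldr (· ∪ ·) ∅ = s

lemma subset_foldr {L : List (Finset α)} {B : Finset α} (h : B ∈ L) :
    B ⊆ L.foldr (· ∪ ·) ∅ := by
  induction L with
  | nil => simp at h
  | cons C L ih =>
    rcases List.mem_cons.mp h with h | h
    · subst h; exact Finset.subset_union_left
    · exact (ih h).trans Finset.subset_union_right

lemma disjoint_foldr {L : List (Finset α)} {B : Finset α}
    (h : ∀ C ∈ L, Disjoint B C) : Disjoint B (L.foldr (· ∪ ·) ∅) := by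
  induction L with
  | nil => simp
  | cons C L ih =>
    simp only [List.foldr_cons, Finset.disjoint_union_right]
    exact ⟨h C (by simp), ih fun C hC => h C (by simp [hC])⟩

lemma length_le_card {L : List (Finset α)} (hd : L.Pairwise Disjoint)
    (hne : ∀ B ∈ L, B.Nonempty) : L.length ≤ (L.foldr (· ∪ ·) ∅).card := by
  induction L with
  | nil => simp
  | cons B L ih =>
    have hdisj : Disjoint B (L.foldr (· ∪ ·) ∅) :=
      disjoint_foldr (by simpa using (List.pairwise_cons.mp hd).1)
    simp only [List.foldr_cons, List.length_cons]
    rw [Finset.card_union_of_disjoint hdisj]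
    have h1 : 1 ≤ B.card := Finset.card_pos.mpr (hne B (by simp))
    have := ih (List.pairwise_cons.mp hd).2 (fun C hC => hne C (by simp [hC]))
    omega

instance finiteBP (s : Finset α) : Finite {L : List (Finset α) // IsBP s L} := by
  have : {L : List (Finset α) | IsBP s L} ⊆ {L | L.length ≤ Fintype.card α} := by
    intro L hL
    obtain ⟨h1, h2, h3⟩ := hL
    have : L.length ≤ (L.foldr (· ∪ ·) ∅).card :=
      length_le_card h1 (fun B hB => Finset.card_pos.mp (by rcases h2 B hB with h | h <;> omega))
    calc L.length ≤ (L.foldr (· ∪ ·) ∅).card := this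
      _ ≤ Fintype.card α := by rw [h3]; exact Finset.card_le_univ s
  exact ((List.finite_length_le (Finset α) (Fintype.card α)).subset this).to_subtype

/-- The recursively defined count. -/
def bp : ℕ → ℕ
  | 0 => 1
  | 1 => 1
  | (k+2) => (k+2) * bp (k+1) + Nat.choose (k+2) 2 * bp k

lemma bp_zero : Nat.card {L : List (Finset α) // IsBP (∅ : Finset α) L} = 1 := by
  have huniq : ∀ L : {L : List (Finset α) // IsBP (∅ : Finset α) L},
      L = ⟨[], by simp [IsBP]⟩ := by
    rintro ⟨L, h1, h2, h3⟩
    apply Subtype.ext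
    cases L with
    | nil => rfl
    | cons B L =>
      exfalso
      have hB : B ⊆ (∅ : Finset α) := h3 ▸ subset_foldr (by simp)
      have : B.card = 1 ∨ B.card = 2 := h2 B (by simp)
      have := Finset.card_le_card hB
      rw [Finset.card_empty] at this; omega
  haveI : Unique {L : List (Finset α) // IsBP (∅ : Finset α) L} :=
    ⟨⟨⟨[], by simp [IsBP]⟩⟩, huniq⟩
  exact Nat.card_unique

lemma bp_equiv (s : Finset α) (hs : s.Nonempty) :
    Nat.card {L : List (Finset α) // IsBP s L} =
      Nat.card ((B : {B : Finset α // B ⊆ s ∧ (B.card = 1 ∨ B.card = 2)}) ×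
        {L : List (Finset α) // IsBP (s \ B.1) L}) := by
  apply (Nat.card_eq_of_bijective
    (fun x : ((B : {B : Finset α // B ⊆ s ∧ (B.card = 1 ∨ B.card = 2)}) ×
        {L : List (Finset α) // IsBP (s \ B.1) L}) =>
      (⟨x.1.1 :: x.2.1, by
        obtain ⟨⟨B, hBs, hBc⟩, ⟨L, h1, h2, h3⟩⟩ := x
        refine ⟨List.pairwise_cons.mpr ⟨fun C hC => ?_, h1⟩, ?_, ?_⟩
        · have : C ⊆ s \ B := h3 ▸ subset_foldr hC
          exact Finset.disjoint_of_subset_right this Finset.disjoint_sdiff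
        · intro C hC
          rcases List.mem_cons.mp hC with hC | hC
          · exact hC ▸ hBc
          · exact h2 C hC
        · simp only [List.foldr_cons, h3]
          exact Finset.union_sdiff_of_subset hBs⟩ : {L : List (Finset α) // IsBP s L}))
    ?_).symm
  constructor
  · rintro ⟨⟨B, hB⟩, ⟨L, hL⟩⟩ ⟨⟨B', hB'⟩, ⟨L', hL'⟩⟩ h
    simp only [Subtype.mk.injEq, List.cons.injEq] at h
    obtain ⟨h1, h2⟩ := h
    subst h1; subst h2; rfl
  · rintro ⟨L, h1, h2, h3⟩
    cases L with
    | nil =>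
      exfalso; rw [← h3] at hs; simp at hs
    | cons B L =>
      have hBs : B ⊆ s := h3 ▸ subset_foldr (by simp)
      have hdisj : Disjoint B (L.foldr (· ∪ ·) ∅) :=
        disjoint_foldr (by simpa using (List.pairwise_cons.mp h1).1)
      have hfold : L.foldr (· ∪ ·) ∅ = s \ B := by
        rw [← h3]
        simp only [List.foldr_cons]
        exact (Finset.union_sdiff_cancel_left hdisj).symm
      refine ⟨⟨⟨B, hBs, h2 B (by simp)⟩,
        ⟨L, (List.pairwise_cons.mp h1).2, fun C hC => h2 C (by simp [hC]), hfold⟩⟩, rfl⟩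

lemma bp_rec (m : ℕ) (h : 1 ≤ m) :
    bp m = m * bp (m - 1) + m.choose 2 * bp (m - 2) := by
  match m, h with
  | 1, _ => simp [bp]
  | (k+2), _ => rfl

lemma card_bp (s : Finset α) : Nat.card {L : List (Finset α) // IsBP s L} = bp s.card := by
  induction s using Finset.strongInduction with
  | _ s ih =>
    rcases s.eq_empty_or_nonempty with rfl | hs
    · simpa [bp] using bp_zero (α := α)
    · rw [bp_equiv s hs]
      haveI : ∀ B : {B : Finset α // B ⊆ s ∧ (B.card = 1 ∨ B.card = 2)},
          Fintype {L : List (Finset α) // IsBP (s \ B.1) L} := fun B => Fintype.ofFinite _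
      rw [Nat.card_eq_fintype_card, Fintype.card_sigma]
      have hsum : ∀ B : {B : Finset α // B ⊆ s ∧ (B.card = 1 ∨ B.card = 2)},
          Fintype.card {L : List (Finset α) // IsBP (s \ B.1) L} = bp (s.card - B.1.card) := by
        intro B
        have hne : B.1.Nonempty := Finset.card_pos.mp (by rcases B.2.2 with h | h <;> omega)
        rw [← Nat.card_eq_fintype_card, ih (s \ B.1) (Finset.sdiff_ssubset B.2.1 hne),
          Finset.card_sdiff_of_subset B.2.1]
      rw [Finset.sum_congr rfl (fun B _ => hsum B)]
      have hmem : ∀ B : Finset α,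
          B ∈ s.powersetCard 1 ∪ s.powersetCard 2 ↔ (B ⊆ s ∧ (B.card = 1 ∨ B.card = 2)) := by
        intro B
        simp only [Finset.mem_union, Finset.mem_powersetCard]
        tauto
      rw [← Finset.sum_subtype (s.powersetCard 1 ∪ s.powersetCard 2) hmem
        (fun B => bp (s.card - B.card))]
      have hdisj : Disjoint (s.powersetCard 1) (s.powersetCard 2) := by
        rw [Finset.disjoint_left]
        intro B h1 h2
        rw [Finset.mem_powersetCard] at h1 h2
        omega
      have e1 : ∑ B ∈ s.powersetCard 1, bp (s.card - B.card)
          = ∑ _B ∈ s.powersetCard 1, bp (s.card - 1) :=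
        Finset.sum_congr rfl (fun B hB => by rw [(Finset.mem_powersetCard.mp hB).2])
      have e2 : ∑ B ∈ s.powersetCard 2, bp (s.card - B.card)
          = ∑ _B ∈ s.powersetCard 2, bp (s.card - 2) :=
        Finset.sum_congr rfl (fun B hB => by rw [(Finset.mem_powersetCard.mp hB).2])
      rw [Finset.sum_union hdisj, e1, e2, Finset.sum_const, Finset.sum_const,
        Finset.card_powersetCard, Finset.card_powersetCard, smul_eq_mul, smul_eq_mul]
      rw [bp_rec s.card (by have := Finset.card_pos.mpr hs; omega), Nat.choose_one_right]



def Todd (m : ℕ) : ℕ := ∑ i ∈ Finset.range (m+1), Nat.choose m (2*i+1) * 3^i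
def Tev (m : ℕ) : ℕ := ∑ i ∈ Finset.range (m+1), Nat.choose m (2*i) * 3^i

lemma todd_succ (m : ℕ) : Todd (m+1) = Todd m + Tev m := by
  unfold Todd Tev
  calc ∑ i ∈ Finset.range (m+2), Nat.choose (m+1) (2*i+1) * 3^i
      = ∑ i ∈ Finset.range (m+2), (Nat.choose m (2*i) * 3^i + Nat.choose m (2*i+1) * 3^i) :=
        Finset.sum_congr rfl (fun i _ => by rw [Nat.choose_succ_succ m (2*i), add_mul])
    _ = (∑ i ∈ Finset.range (m+2), Nat.choose m (2*i) * 3^i)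
        + ∑ i ∈ Finset.range (m+2), Nat.choose m (2*i+1) * 3^i := Finset.sum_add_distrib
    _ = (∑ i ∈ Finset.range (m+1), Nat.choose m (2*i) * 3^i)
        + ∑ i ∈ Finset.range (m+1), Nat.choose m (2*i+1) * 3^i := by
        rw [Finset.sum_range_succ (fun i => Nat.choose m (2*i) * 3^i) (m+1),
            Finset.sum_range_succ (fun i => Nat.choose m (2*i+1) * 3^i) (m+1),
            Nat.choose_eq_zero_of_lt (by omega), Nat.choose_eq_zero_of_lt (by omega)]
        simp
    _ = _ := by omega

lemma tev_aux (m k : ℕ) :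
    ∑ i ∈ Finset.range (k+1), Nat.choose m (2*i) * 3^i
      = 1 + 3 * ∑ i ∈ Finset.range k, Nat.choose m (2*i+2) * 3^i := by
  rw [Finset.sum_range_succ' (fun i => Nat.choose m (2*i) * 3^i) k]
  simp only [Nat.mul_zero, Nat.choose_zero_right, pow_zero, mul_one]
  rw [Finset.mul_sum, add_comm]
  congr 1
  refine Finset.sum_congr rfl (fun i _ => ?_)
  have h2 : 2*(i+1) = 2*i+2 := by ring
  rw [h2, pow_succ]
  ring

lemma tev_succ (m : ℕ) : Tev (m+1) = Tev m + 3 * Todd m := by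
  have lhs : Tev (m+1) = 1 + 3 * ∑ i ∈ Finset.range (m+1), Nat.choose (m+1) (2*i+2) * 3^i :=
    tev_aux (m+1) (m+1)
  have rhs : Tev m = 1 + 3 * ∑ i ∈ Finset.range m, Nat.choose m (2*i+2) * 3^i :=
    tev_aux m m
  have split : ∑ i ∈ Finset.range (m+1), Nat.choose (m+1) (2*i+2) * 3^i
      = (∑ i ∈ Finset.range (m+1), Nat.choose m (2*i+1) * 3^i)
        + ∑ i ∈ Finset.range (m+1), Nat.choose m (2*i+2) * 3^i := by
    rw [← Finset.sum_add_distrib]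
    refine Finset.sum_congr rfl (fun i _ => ?_)
    rw [Nat.choose_succ_succ m (2*i+1), add_mul]
  have drop : ∑ i ∈ Finset.range (m+1), Nat.choose m (2*i+2) * 3^i
      = ∑ i ∈ Finset.range m, Nat.choose m (2*i+2) * 3^i := by
    rw [Finset.sum_range_succ (fun i => Nat.choose m (2*i+2) * 3^i) m,
      Nat.choose_eq_zero_of_lt (by omega)]
    simp
  have htodd : Todd m = ∑ i ∈ Finset.range (m+1), Nat.choose m (2*i+1) * 3^i := rfl
  omega

lemma todd_rec (m : ℕ) : Todd (m+2) = 2 * Todd (m+1) + 2 * Todd m := by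
  have a1 : Todd (m+2) = Todd (m+1) + Tev (m+1) := todd_succ (m+1)
  have a2 := todd_succ m
  have b := tev_succ m
  omega

lemma two_mul_choose_two : ∀ n : ℕ, 2 * Nat.choose (n+2) 2 = (n+2)*(n+1) := by
  intro n
  induction n with
  | zero => decide
  | succ k ih =>
    show 2 * Nat.choose (k+3) 2 = (k+3)*(k+2)
    have h1 : Nat.choose (k+3) 2 = Nat.choose (k+2) 1 + Nat.choose (k+2) 2 :=
      Nat.choose_succ_succ (k+2) 1
    have h2 : Nat.choose (k+2) 1 = k+2 := Nat.choose_one_right _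
    have h3 : (k+3)*(k+2) = (k+2)*(k+1) + 2*(k+2) := by ring
    omega

lemma key : ∀ n : ℕ, 2^n * bp n = n.factorial * Todd (n+1)
  | 0 => by decide
  | 1 => by decide
  | (n+2) => by
    have ih1 := key (n+1)
    have ih2 := key n
    have hb : bp (n+2) = (n+2) * bp (n+1) + Nat.choose (n+2) 2 * bp n := rfl
    have hc := two_mul_choose_two n
    calc 2^(n+2) * bp (n+2)
        = 2*(n+2) * (2^(n+1) * bp (n+1)) + 2 * (2*Nat.choose (n+2) 2) * (2^n * bp n) := by
          rw [hb]; ring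
      _ = 2*(n+2) * ((n+1).factorial * Todd (n+2)) + 2 * ((n+2)*(n+1)) * (n.factorial * Todd (n+1)) := by
          rw [ih1, ih2, hc]
      _ = (n+2).factorial * (2 * Todd (n+2) + 2 * Todd (n+1)) := by
          simp only [Nat.factorial_succ]; ring
      _ = (n+2).factorial * Todd (n+3) := by rw [todd_rec (n+1)]

lemma sum_eq_todd (n : ℕ) :
    ∑ i ∈ Finset.range (n/2+1), Nat.choose (n+1) (2*i+1) * 3^i = Todd (n+1) := by
  unfold Todd
  apply Finset.sum_subset
  · intro i hi
    simp only [Finset.mem_range] at hi ⊢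
    omega
  · intro i _ hi
    simp only [Finset.mem_range, not_lt] at hi
    rw [Nat.choose_eq_zero_of_lt (by omega), zero_mul]


lemma barredCount_eq_bp (n : ℕ) : barredCount n = bp n := by
  have h : Nat.card {L : List (Finset (Fin n)) // IsBP (Finset.univ : Finset (Fin n)) L}
      = bp (Finset.univ : Finset (Fin n)).card := card_bp _
  rw [Finset.card_univ, Fintype.card_fin] at h
  exact h

end Aux

/-- `2^n · b_n = n! · Σ_{i=0}^{⌊n/2⌋} C(n+1, 2i+1) · 3^i`. -/
theorem barredCount_closed_formula (n : ℕ) :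
    2 ^ n * barredCount n =
      n.factorial * ∑ i ∈ Finset.range (n / 2 + 1), Nat.choose (n + 1) (2 * i + 1) * 3 ^ i := by
  rw [barredCount_eq_bp, sum_eq_todd n]
  exact key n
end

section
/- Define rational numbers a_k = b_k / k! for k ≥ 0. Then a_0 = a_1 = 1 and for every k ≥ 2 one has a_k = a_{k−1} + (1/2)·a_{k−2}. -/
open Finset


section General
variable {α : Type*} [Fintype α] [DecidableEq α]

def GBP (L : List (Finset α)) : Prop :=
  L.Pairwise Disjoint ∧ (∀ B ∈ L, B.card = 1 ∨ B.card = 2) ∧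
    L.foldr (· ∪ ·) ∅ = Finset.univ

lemma GBP.nodup {L : List (Finset α)} (h : GBP L) : L.Nodup := by
  refine List.Pairwise.imp_of_mem ?_ h.1
  intro B C hB hC hd
  rintro rfl
  have hne : B.Nonempty := by
    rcases h.2.1 B hB with h1 | h1 <;> exact card_pos.1 (by omega)
  exact hne.ne_empty (disjoint_self.1 hd)

instance finite_GBP : Finite {L : List (Finset α) // GBP L} := by
  apply Finite.of_injective
    (fun L => (⟨L.1, L.2.nodup⟩ : {l : List (Finset α) // l.Nodup}))
  intro a b h
  exact Subtype.ext (by simpa [Subtype.ext_iff] using h)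

end General

def bfun : ℕ → ℕ
  | 0 => 1
  | 1 => 1
  | (n+2) => (n+2) * bfun (n+1) + Nat.choose (n+2) 2 * bfun n

section Up
variable {α : Type*} [Fintype α] [DecidableEq α] (B : Finset α)

/-- lift a finset of `↥(Bᶜ)` to a finset of `α`. -/
def upF (C : Finset {x : α // x ∈ Bᶜ}) : Finset α :=
  C.map (Function.Embedding.subtype _)

/-- restrict a finset of `α` to `↥(Bᶜ)`. -/
def downF (C : Finset α) : Finset {x : α // x ∈ Bᶜ} :=
  C.subtype (· ∈ Bᶜ)

variable {B}

lemma mem_upF {C : Finset {x : α // x ∈ Bᶜ}} {x : α} :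
    x ∈ upF B C ↔ ∃ h : x ∈ Bᶜ, (⟨x, h⟩ : {x : α // x ∈ Bᶜ}) ∈ C := by
  simp only [upF, Finset.mem_map, Function.Embedding.coe_subtype]
  constructor
  · rintro ⟨⟨a, ha⟩, haC, rfl⟩; exact ⟨ha, haC⟩
  · rintro ⟨h, hC⟩; exact ⟨⟨x, h⟩, hC, rfl⟩

lemma upF_subset (C : Finset {x : α // x ∈ Bᶜ}) : upF B C ⊆ Bᶜ := by
  intro x hx; rcases mem_upF.1 hx with ⟨h, _⟩; exact h

lemma downF_upF (C : Finset {x : α // x ∈ Bᶜ}) : downF B (upF B C) = C := by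
  ext ⟨x, hx⟩
  simp only [downF, Finset.mem_subtype, mem_upF]
  exact ⟨fun ⟨_, hc⟩ => hc, fun hc => ⟨hx, hc⟩⟩

lemma upF_downF {C : Finset α} (h : C ⊆ Bᶜ) : upF B (downF B C) = C := by
  rw [upF, downF, Finset.subtype_map]
  exact Finset.filter_true_of_mem fun x hx => h hx

lemma card_upF (C : Finset {x : α // x ∈ Bᶜ}) : (upF B C).card = C.card :=
  Finset.card_map _

lemma upF_union (C D : Finset {x : α // x ∈ Bᶜ}) :
    upF B (C ∪ D) = upF B C ∪ upF B D :=
  Finset.map_union _ _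

lemma downF_union (C D : Finset α) :
    downF B (C ∪ D) = downF B C ∪ downF B D := by
  ext ⟨x, hx⟩; simp [downF, Finset.mem_subtype]

lemma upF_empty : upF B (∅ : Finset {x : α // x ∈ Bᶜ}) = ∅ := rfl

lemma downF_compl : downF B (Bᶜ) = Finset.univ := by
  ext ⟨x, hx⟩; simp [downF, Finset.mem_subtype, hx]

lemma upF_univ : upF B (Finset.univ : Finset {x : α // x ∈ Bᶜ}) = Bᶜ := by
  rw [← downF_compl, upF_downF subset_rfl]

lemma upF_disjoint {C D : Finset {x : α // x ∈ Bᶜ}} (h : Disjoint C D) :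
    Disjoint (upF B C) (upF B D) :=
  (Finset.disjoint_map _).2 h

lemma downF_disjoint {C D : Finset α} (h : Disjoint C D) :
    Disjoint (downF B C) (downF B D) := by
  rw [Finset.disjoint_left] at h ⊢
  intro a haC haD
  exact h (Finset.mem_subtype.1 haC) (Finset.mem_subtype.1 haD)

lemma upF_foldr (T : List (Finset {x : α // x ∈ Bᶜ})) :
    (T.map (upF B)).foldr (· ∪ ·) ∅ = upF B (T.foldr (· ∪ ·) ∅) := by
  induction T with
  | nil => simp [upF_empty]
  | cons C T ih => simp [ih, upF_union]

lemma downF_foldr (T : List (Finset α)) :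
    (T.map (downF B)).foldr (· ∪ ·) ∅ = downF B (T.foldr (· ∪ ·) ∅) := by
  induction T with
  | nil => ext ⟨x, hx⟩; simp [downF, Finset.mem_subtype]
  | cons C T ih => simp [ih, downF_union]

end Up

section Step
variable {α : Type*} [Fintype α] [DecidableEq α]

lemma nat_card_sigma {ι : Type*} [Fintype ι] (f : ι → Type*) [∀ i, Finite (f i)] :
    Nat.card (Sigma f) = ∑ i, Nat.card (f i) := by
  letI := fun i => Fintype.ofFinite (f i)
  simp [Nat.card_eq_fintype_card]

lemma step (hne : Nonempty α) :
    Nat.card {L : List (Finset α) // GBP L}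
      = ∑ B : {B : Finset α // B.card = 1 ∨ B.card = 2},
          Nat.card {L : List (Finset {x : α // x ∈ (B : Finset α)ᶜ}) // GBP L} := by
  classical
  rw [← nat_card_sigma]
  refine Nat.card_congr (Equiv.symm (Equiv.ofBijective ?_ ⟨?_, ?_⟩))
  · rintro ⟨⟨B, hB⟩, ⟨T, hT⟩⟩
    refine ⟨B :: T.map (upF B), ?_, ?_, ?_⟩
    · rw [List.pairwise_cons]
      constructor
      · intro C hC
        rcases List.mem_map.1 hC with ⟨D, _, rfl⟩
        exact disjoint_compl_right.mono_right (upF_subset D)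
      · rw [List.pairwise_map]
        exact hT.1.imp upF_disjoint
    · intro C hC
      rcases List.mem_cons.1 hC with rfl | h
      · exact hB
      · rcases List.mem_map.1 h with ⟨D, hD, rfl⟩
        rw [card_upF]
        exact hT.2.1 D hD
    · simp only [List.foldr_cons, upF_foldr, hT.2.2, upF_univ, Finset.union_compl]
  · rintro ⟨⟨B, hB⟩, ⟨T, hT⟩⟩ ⟨⟨B', hB'⟩, ⟨T', hT'⟩⟩ h
    replace h := congrArg Subtype.val h
    simp only [Subtype.mk.injEq, List.cons.injEq] at h
    obtain ⟨rfl, hTT⟩ := h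
    have : T = T' := by
      refine List.map_injective_iff.2 ?_ hTT
      intro C D hCD
      have := congrArg (downF B) hCD
      rwa [downF_upF, downF_upF] at this
    subst this
    rfl
  · rintro ⟨L, hL⟩
    obtain ⟨B, T, rfl⟩ : ∃ B T, L = B :: T := by
      cases L with
      | nil =>
        exfalso
        obtain ⟨x⟩ := hne
        have h0 : (∅ : Finset α) = Finset.univ := by simpa using hL.2.2
        have hx : x ∈ (∅ : Finset α) := by rw [h0]; exact Finset.mem_univ x
        simp at hx
      | cons B T => exact ⟨B, T, rfl⟩
    have hBdisj : ∀ C ∈ T, Disjoint B C := (List.pairwise_cons.1 hL.1).1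
    have hsub : ∀ C ∈ T, C ⊆ Bᶜ := by
      intro C hC
      exact (hBdisj C hC).le_compl_left
    have hfold : T.foldr (· ∪ ·) ∅ = Bᶜ := by
      have h1 : T.foldr (· ∪ ·) ∅ ⊆ Bᶜ := by
        clear hL
        induction T with
        | nil => simp
        | cons C T ih =>
          simp only [List.foldr_cons, Finset.union_subset_iff]
          exact ⟨hsub C (by simp), ih (fun D hD => hBdisj D (by simp [hD]))
            (fun D hD => hsub D (by simp [hD]))⟩
      have h2 : Bᶜ ⊆ T.foldr (· ∪ ·) ∅ := by
        intro x hx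
        have := hL.2.2
        simp only [List.foldr_cons] at this
        have hxu : x ∈ B ∪ T.foldr (· ∪ ·) ∅ := this ▸ Finset.mem_univ x
        rcases Finset.mem_union.1 hxu with h | h
        · exact absurd h (Finset.mem_compl.1 hx)
        · exact h
      exact subset_antisymm h1 h2
    refine ⟨⟨⟨B, hL.2.1 B (by simp)⟩, ⟨T.map (downF B), ?_, ?_, ?_⟩⟩, ?_⟩
    · rw [List.pairwise_map]
      exact (List.pairwise_cons.1 hL.1).2.imp downF_disjoint
    · intro C hC
      rcases List.mem_map.1 hC with ⟨D, hD, rfl⟩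
      have : (upF B (downF B D)).card = D.card := by rw [upF_downF (hsub D hD)]
      rw [card_upF] at this
      rw [this]
      exact hL.2.1 D (by simp [hD])
    · rw [downF_foldr, hfold, downF_compl]
    · refine Subtype.ext ?_
      simp only
      congr 1
      rw [List.map_map]
      conv_rhs => rw [← List.map_id T]
      refine List.map_congr_left ?_
      intro C hC
      exact upF_downF (hsub C hC)
    
end Step

lemma bfun_rec (n : ℕ) (h : 1 ≤ n) :
    n.choose 1 * bfun (n-1) + n.choose 2 * bfun (n-2) = bfun n := by
  match n with
  | 1 => simp [bfun]
  | (m+2) => simp [bfun, Nat.choose_one_right]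

lemma card_GBP (n : ℕ) : ∀ (α : Type) [Fintype α] [DecidableEq α],
    Fintype.card α = n → Nat.card {L : List (Finset α) // GBP L} = bfun n := by
  induction n using Nat.strong_induction_on with
  | _ n ih =>
    intro α _ _ hcard
    rcases Nat.eq_zero_or_pos n with rfl | hpos
    · haveI : IsEmpty α := Fintype.card_eq_zero_iff.1 hcard
      have hnil : GBP ([] : List (Finset α)) :=
        ⟨List.Pairwise.nil, by simp, by simp [Finset.univ_eq_empty]⟩
      haveI : Unique {L : List (Finset α) // GBP L} := by
        refine ⟨⟨⟨[], hnil⟩⟩, ?_⟩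
        rintro ⟨L, hL⟩
        cases L with
        | nil => rfl
        | cons B T =>
          exfalso
          have hB : B = ∅ := Finset.eq_empty_of_isEmpty B
          rcases hL.2.1 B (by simp) with h | h <;> simp [hB] at h
      simp [Nat.card_unique, bfun]
    · haveI hne : Nonempty α := Fintype.card_pos_iff.1 (hcard ▸ hpos)
      rw [step hne]
      have key : ∀ B : {B : Finset α // B.card = 1 ∨ B.card = 2},
          Nat.card {L : List (Finset {x : α // x ∈ (B : Finset α)ᶜ}) // GBP L}
            = bfun (n - (B : Finset α).card) := by
        intro B
        have hfilter : Finset.univ.filter (· ∈ (B : Finset α)ᶜ) = (B : Finset α)ᶜ := by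
          ext a; simp
        have hc : Fintype.card {x : α // x ∈ (B : Finset α)ᶜ}
            = n - (B : Finset α).card := by
          rw [Fintype.card_of_subtype ((B : Finset α)ᶜ) (fun x => Iff.rfl),
            Finset.card_compl, hcard]
        have hlt : n - (B : Finset α).card < n := by
          rcases B.2 with h | h <;> omega
        exact ih _ hlt _ hc
      calc ∑ B : {B : Finset α // B.card = 1 ∨ B.card = 2},
            Nat.card {L : List (Finset {x : α // x ∈ (B : Finset α)ᶜ}) // GBP L}
          = ∑ B : {B : Finset α // B.card = 1 ∨ B.card = 2},
              bfun (n - (B : Finset α).card) := by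
            exact Finset.sum_congr rfl fun B _ => key B
        _ = ∑ B ∈ Finset.univ.filter (fun B : Finset α => B.card = 1 ∨ B.card = 2),
              bfun (n - B.card) := by
            exact (Finset.sum_subtype
              (Finset.univ.filter (fun B : Finset α => B.card = 1 ∨ B.card = 2))
              (fun x => by simp) (fun B : Finset α => bfun (n - B.card))).symm
        _ = ∑ B ∈ Finset.powersetCard 1 (Finset.univ : Finset α) ∪
              Finset.powersetCard 2 Finset.univ, bfun (n - B.card) := by
            congr 1
            ext s
            simp [Finset.mem_powersetCard_univ]
        _ = (∑ B ∈ Finset.powersetCard 1 (Finset.univ : Finset α), bfun (n - B.card))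
            + ∑ B ∈ Finset.powersetCard 2 (Finset.univ : Finset α), bfun (n - B.card) := by
            refine Finset.sum_union ?_
            rw [Finset.disjoint_left]
            intro s hs1 hs2
            rw [Finset.mem_powersetCard_univ] at hs1 hs2
            omega
        _ = n.choose 1 * bfun (n-1) + n.choose 2 * bfun (n-2) := by
            have e1 : ∑ B ∈ Finset.powersetCard 1 (Finset.univ : Finset α),
                bfun (n - B.card) = ∑ _B ∈ Finset.powersetCard 1 (Finset.univ : Finset α),
                bfun (n - 1) :=
              Finset.sum_congr rfl fun B hB => by rw [Finset.mem_powersetCard_univ.1 hB]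
            have e2 : ∑ B ∈ Finset.powersetCard 2 (Finset.univ : Finset α),
                bfun (n - B.card) = ∑ _B ∈ Finset.powersetCard 2 (Finset.univ : Finset α),
                bfun (n - 2) :=
              Finset.sum_congr rfl fun B hB => by rw [Finset.mem_powersetCard_univ.1 hB]
            rw [e1, e2, Finset.sum_const, Finset.sum_const, Finset.card_powersetCard,
              Finset.card_powersetCard, Finset.card_univ, hcard, smul_eq_mul, smul_eq_mul]
        _ = bfun n := bfun_rec n hpos

lemma barredCount_eq (n : ℕ) : barredCount n = bfun n :=
  card_GBP n (Fin n) (Fintype.card_fin n)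


/-- The rational numbers `a_k = b_k / k!` satisfy `a_0 = a_1 = 1` and
`a_k = a_{k−1} + (1/2) a_{k−2}` for all `k ≥ 2`. -/
theorem barredCount_normalized_recurrence (a : ℕ → ℚ)
    (ha : ∀ k, a k = (barredCount k : ℚ) / k.factorial) :
    a 0 = 1 ∧ a 1 = 1 ∧ ∀ k, 2 ≤ k → a k = a (k - 1) + (1 / 2) * a (k - 2) := by
  have hb : ∀ k, a k = (bfun k : ℚ) / k.factorial := by
    intro k; rw [ha, barredCount_eq]
  refine ⟨by simp [hb 0, bfun], by simp [hb 1, bfun], ?_⟩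
  intro k hk
  obtain ⟨m, rfl⟩ : ∃ m, k = m + 2 := ⟨k - 2, by omega⟩
  have h1 : m + 2 - 1 = m + 1 := rfl
  have h2 : m + 2 - 2 = m := rfl
  rw [h1, h2, hb, hb, hb]
  have hbf : (bfun (m+2) : ℚ) = (m+2) * bfun (m+1) + ((m+2).choose 2 : ℕ) * bfun m := by
    rw [show bfun (m+2) = (m+2) * bfun (m+1) + Nat.choose (m+2) 2 * bfun m from rfl]
    push_cast
    ring
  rw [hbf, Nat.cast_choose_two]
  have f2 : ((m+2).factorial : ℚ) = ((m:ℚ)+2) * (((m:ℚ)+1) * (m.factorial : ℚ)) := by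
    rw [Nat.factorial_succ, Nat.factorial_succ]; push_cast; ring
  have f1 : ((m+1).factorial : ℚ) = ((m:ℚ)+1) * (m.factorial : ℚ) := by
    rw [Nat.factorial_succ]; push_cast; ring
  rw [f2, f1]
  have hm : (m.factorial : ℚ) ≠ 0 := Nat.cast_ne_zero.2 m.factorial_ne_zero
  have hm1 : ((m:ℚ)+1) ≠ 0 := by positivity
  have hm2 : ((m:ℚ)+2) ≠ 0 := by positivity
  push_cast
  field_simp
  ring
end

section
/- For every integer n ≥ 1 there exists an admissible sequence of length n; that is, there exists a strictly increasing function a : {0,…,n−1} → ℤ such that Σ_{i=0}^{n−1} a_i = 0, such that a_i + a_j < a_k + a_l whenever i, j, k < l, and such that 2·a_i < a_j + a_k whenever i, j < k. -/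
lemma pow3_lt {i l : ℕ} (h : i < l) : 2 * (3:ℤ)^i < 3^l := by
  calc 2 * (3:ℤ)^i ≤ 2 * 3^(l-1) := by
        gcongr <;> [norm_num; omega]
    _ < 3 * 3^(l-1) := by
        have := pow_pos (by norm_num : (0:ℤ)<3) (l-1); linarith
    _ = 3^l := by rw [← pow_succ']; congr 1; omega

/-- For every `n ≥ 1` there exists an admissible sequence of length `n`:
a strictly increasing `a : Fin n → ℤ` with `Σ a i = 0`, with
`a i + a j < a k + a l` whenever `i, j, k < l`, and `2 a i < a j + a k`
whenever `i, j < k`. -/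
theorem exists_admissible_sequence (n : ℕ) (hn : 1 ≤ n) :
    ∃ a : Fin n → ℤ,
      StrictMono a ∧
      (∑ i, a i) = 0 ∧
      (∀ i j k l : Fin n, i < l → j < l → k < l → a i + a j < a k + a l) ∧
      (∀ i j k : Fin n, i < k → j < k → 2 * a i < a j + a k) := by
  refine ⟨fun i => 2 * n * 3 ^ (i : ℕ) - (3 ^ n - 1), ?_, ?_, ?_, ?_⟩
  · intro i j hij
    dsimp only
    have : (3:ℤ)^(i:ℕ) < 3^(j:ℕ) := by
      apply pow_lt_pow_right₀ (by norm_num) hij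
    have hn' : (0:ℤ) < n := by exact_mod_cast hn
    nlinarith
  · have hgs := geom_sum_mul (3:ℤ) n
    dsimp only
    rw [Fin.sum_univ_eq_sum_range (fun i => 2 * (n:ℤ) * 3 ^ i - (3 ^ n - 1))]
    rw [Finset.sum_sub_distrib, Finset.sum_const, Finset.card_range, ← Finset.mul_sum]
    linear_combination (n:ℤ) * hgs
  · intro i j k l hi hj hk
    dsimp only
    have h1 : 2 * (3:ℤ)^(i:ℕ) < 3^(l:ℕ) := pow3_lt hi
    have h2 : 2 * (3:ℤ)^(j:ℕ) < 3^(l:ℕ) := pow3_lt hj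
    have h3 : (0:ℤ) < 3^(k:ℕ) := by positivity
    have hn' : (1:ℤ) ≤ n := by exact_mod_cast hn
    nlinarith
  · intro i j k hi hj
    dsimp only
    have h1 : 2 * (3:ℤ)^(i:ℕ) < 3^(k:ℕ) := pow3_lt hi
    have h3 : (0:ℤ) < 3^(j:ℕ) := by positivity
    have hn' : (1:ℤ) ≤ n := by exact_mod_cast hn
    nlinarith
end
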